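/- Let n ≥ 1 and m ≥ 1, let e = (e_1,…,e_n) be in J_n and f = (f_1,…,f_m) be in J_m, and set k = first(e) and ℓ = first(f). Define g of length n+m by g = (e_1,…,e_k, f_1,…,f_m, ẽ_{k+1},…,ẽ_n), where ẽ_i = e_i + m if e_i > 0 and ẽ_i = 0 if e_i = 0. Then g is an inversion sequence of length n+m avoiding both 101 and 021 (i.e., g is in J_{n+m}) and first(g) = k + ℓ. -/

import Mathlib

/-- An `F`-step: `(0,1)` or `(a,b)` with `a ≥ 1` and `b ≤ 1`. -/
def IsFStep (s : ℤ × ℤ) : Prop := s = (0, 1) ∨ (1 ≤ s.1 ∧ s.2 ≤ 1)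

/-- An `F`-path: a sequence of `F`-steps whose prefix sums satisfy
`a_1 + ⋯ + a_i ≤ b_1 + ⋯ + b_i`. -/
def IsFPath (Q : List (ℤ × ℤ)) : Prop :=
  (∀ s ∈ Q, IsFStep s) ∧
  ∀ i : ℕ, ((Q.take i).map Prod.fst).sum ≤ ((Q.take i).map Prod.snd).sum

/-- The set of `F`-paths of length `n`. -/
def FPaths (n : ℕ) : Set (List (ℤ × ℤ)) := {Q | Q.length = n ∧ IsFPath Q}

def fheight (Q : List (ℤ × ℤ)) : ℤ := (Q.map Prod.snd).sum - (Q.map Prod.fst).sum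

def fnorth (Q : List (ℤ × ℤ)) : ℕ := Q.countP (fun s => decide (s = ((0 : ℤ), (1 : ℤ))))

def faone (Q : List (ℤ × ℤ)) : ℕ := Q.countP (fun s => decide (s.1 = 1))

def fbone (Q : List (ℤ × ℤ)) : ℕ := Q.countP (fun s => decide (s.2 = 1))

/-- Steps of a Schröder path. -/
inductive SStep : Type
  | u | d | h
deriving DecidableEq

/-- The width of a Schröder step. -/
def swidth : SStep → ℕ
  | .u => 1
  | .d => 1
  | .h => 2

/-- The height-change of a Schröder step. -/
def shc : SStep → ℤ
  | .u => 1
  | .d => -1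
  | .h => 0

/-- A Schröder path of semilength `n`. -/
def IsSchroder (n : ℕ) (P : List SStep) : Prop :=
  (P.map swidth).sum = 2 * n ∧ (P.map shc).sum = 0 ∧
  ∀ i : ℕ, 0 ≤ ((P.take i).map shc).sum

/-- Schröder paths of semilength `n` without triple descents. -/
def SchP (n : ℕ) : Set (List SStep) :=
  {P | IsSchroder n P ∧ ¬ [SStep.d, SStep.d, SStep.d] <:+: P}

/-- Number of `h` letters preceded by a prefix of total height-change `0`. -/
noncomputable def scomp (P : List SStep) : ℕ :=
  Set.ncard {i : ℕ | P[i]? = some SStep.h ∧ ((P.take i).map shc).sum = 0}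

/-- Number of `h` letters plus number of double descents. -/
noncomputable def shdd (P : List SStep) : ℕ :=
  P.countP (fun s => decide (s = SStep.h)) +
    Set.ncard {i : ℕ | P[i]? = some SStep.d ∧ P[i + 1]? = some SStep.d}

/-- Number of peaks `ud`. -/
noncomputable def speak (P : List SStep) : ℕ :=
  Set.ncard {i : ℕ | P[i]? = some SStep.u ∧ P[i + 1]? = some SStep.d}

/-- Steps of a bicolored Dyck path: up, red down, black down. -/
inductive BStep : Type
  | u | dR | dB
deriving DecidableEq

/-- A restricted bicolored Dyck path of semilength `n`:
`u^{i_1} dR^{j_1} dB^{k_1} ⋯ u^{i_{ℓ-1}} dR^{j_{ℓ-1}} dB^{k_{ℓ-1}} u^{i_ℓ} dR^{j_ℓ}`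
with positive `i`'s and `k`'s, `∑ i = n`, `∑ j + ∑ k = n`, and every prefix having
at least as many `u`'s as down steps. -/
def IsRBD (n : ℕ) (B : List BStep) : Prop :=
  (∃ (blocks : List (ℕ × ℕ × ℕ)) (iL jL : ℕ),
    (∀ t ∈ blocks, 1 ≤ t.1 ∧ 1 ≤ t.2.2) ∧ 1 ≤ iL ∧
    B = (blocks.map (fun t =>
        List.replicate t.1 BStep.u ++ List.replicate t.2.1 BStep.dR ++
          List.replicate t.2.2 BStep.dB)).flatten ++
        (List.replicate iL BStep.u ++ List.replicate jL BStep.dR) ∧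
    (blocks.map (fun t => t.1)).sum + iL = n ∧
    (blocks.map (fun t => t.2.1)).sum + jL + (blocks.map (fun t => t.2.2)).sum = n) ∧
  ∀ i : ℕ, (B.take i).countP (fun s => decide (s ≠ BStep.u)) ≤
    (B.take i).countP (fun s => decide (s = BStep.u))

/-- The length of the final run of red down steps. -/
def blast (B : List BStep) : ℕ := (B.reverse.takeWhile (fun s => decide (s = BStep.dR))).length

/-- The number of double ascents `uu`. -/
noncomputable def bdasc (B : List BStep) : ℕ :=
  Set.ncard {i : ℕ | B[i]? = some BStep.u ∧ B[i + 1]? = some BStep.u}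

/-- The number of occurrences of `u dB u` or `dR dB u`. -/
noncomputable def bbval (B : List BStep) : ℕ :=
  Set.ncard {i : ℕ | (B[i]? = some BStep.u ∨ B[i]? = some BStep.dR) ∧
    B[i + 1]? = some BStep.dB ∧ B[i + 2]? = some BStep.u}

/-- `π : ℕ → ℕ` encodes a permutation of `{1,…,N}`, with value `0` outside
(in particular `π 0 = 0`). -/
def IsPermOn (N : ℕ) (π : ℕ → ℕ) : Prop :=
  Set.BijOn π (Set.Icc 1 N) (Set.Icc 1 N) ∧ ∀ i, i ∉ Set.Icc 1 N → π i = 0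

/-- `π` contains the pattern given by the word `σ`. -/
def ContainsPat (N : ℕ) (π : ℕ → ℕ) (σ : List ℕ) : Prop :=
  ∃ f : Fin σ.length → ℕ, StrictMono f ∧ (∀ t, f t ∈ Set.Icc 1 N) ∧
    ∀ s t : Fin σ.length, π (f s) < π (f t) ↔ σ.get s < σ.get t

/-- Permutations of `{1,…,N}` avoiding the patterns `2341`, `2431` and `3241`. -/
def PermSet (N : ℕ) : Set (ℕ → ℕ) :=
  {π | IsPermOn N π ∧ ¬ContainsPat N π [2, 3, 4, 1] ∧ ¬ContainsPat N π [2, 4, 3, 1] ∧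
    ¬ContainsPat N π [3, 2, 4, 1]}

/-- `block(π)`: the number of `j ∈ {1,…,N}` with `{π(1),…,π(j)} = {1,…,j}`. -/
noncomputable def blockStat (N : ℕ) (π : ℕ → ℕ) : ℕ :=
  Set.ncard {j : ℕ | 1 ≤ j ∧ j ≤ N ∧ π '' Set.Icc 1 j = Set.Icc 1 j}

/-- `asc(π)`: the number of ascents of `π`. -/
noncomputable def ascStat (N : ℕ) (π : ℕ → ℕ) : ℕ :=
  Set.ncard {i : ℕ | 1 ≤ i ∧ i + 1 ≤ N ∧ π i < π (i + 1)}

/-- `crit(π)`: the number of critical entries of `π`. -/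
noncomputable def critStat (N : ℕ) (π : ℕ → ℕ) : ℕ :=
  Set.ncard {i : ℕ | 1 ≤ i ∧ i ≤ N ∧ ∀ j k : ℕ, 1 ≤ j → j < i → i < k → k ≤ N →
    π j < π i → π k < π i → π j < π k}

/-- An inversion sequence: `0 ≤ e_i < i` (1-indexed). -/
def IsInvSeq (e : List ℕ) : Prop := ∀ i : Fin e.length, e.get i < i.val + 1

/-- `e` contains the pattern `101`. -/
def Contains101 (e : List ℕ) : Prop :=
  ∃ i j k : Fin e.length, i < j ∧ j < k ∧ e.get j < e.get i ∧ e.get i = e.get k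

/-- `e` contains the pattern `102`. -/
def Contains102 (e : List ℕ) : Prop :=
  ∃ i j k : Fin e.length, i < j ∧ j < k ∧ e.get j < e.get i ∧ e.get i < e.get k

/-- `e` contains the pattern `021`. -/
def Contains021 (e : List ℕ) : Prop :=
  ∃ i j k : Fin e.length, i < j ∧ j < k ∧ e.get i < e.get k ∧ e.get k < e.get j

/-- Inversion sequences of length `n` avoiding `101` and `102`. -/
def ISet (n : ℕ) : Set (List ℕ) :=
  {e | e.length = n ∧ IsInvSeq e ∧ ¬Contains101 e ∧ ¬Contains102 e}

/-- Inversion sequences of length `n` avoiding `101` and `021`. -/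
def JSet (n : ℕ) : Set (List ℕ) :=
  {e | e.length = n ∧ IsInvSeq e ∧ ¬Contains101 e ∧ ¬Contains021 e}

/-- The largest entry of `e` (`0` for the empty sequence). -/
def maxVal (e : List ℕ) : ℕ := e.foldr max 0

/-- The largest (1-indexed) position of the maximal entry of `e`. -/
def maxid (e : List ℕ) : ℕ := e.length - e.reverse.idxOf (maxVal e)

/-- `e` with the entry at position `maxid e` removed. -/
def ehat (e : List ℕ) : List ℕ := e.eraseIdx (maxid e - 1)

/-- `omi(e)`: the number of `i ∈ {1,…,n}` not occurring as an entry of `e`. -/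
noncomputable def omi (e : List ℕ) : ℕ := Set.ncard {i : ℕ | 1 ≤ i ∧ i ≤ e.length ∧ i ∉ e}

/-- `cons(e)`: the number of `i ∈ {1,…,n-1}` such that both `i-1` and `i` occur in `e`. -/
noncomputable def consStat (e : List ℕ) : ℕ :=
  Set.ncard {i : ℕ | 1 ≤ i ∧ i + 1 ≤ e.length ∧ (i - 1) ∈ e ∧ i ∈ e}

/-- `first(e)`: the length of the initial run of zeros of `e`. -/
def firstStat (e : List ℕ) : ℕ := (e.takeWhile (fun v => decide (v = 0))).length

/-- `single(e)`: the number of positive integers occurring exactly once in `e`. -/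
noncomputable def singleStat (e : List ℕ) : ℕ := Set.ncard {v : ℕ | 1 ≤ v ∧ e.count v = 1}

/-- The binomial coefficient `C(p,q)`, interpreted as `0` unless `0 ≤ q ≤ p`. -/
def C (p q : ℤ) : ℤ := if 0 ≤ q ∧ q ≤ p then (p.toNat.choose q.toNat : ℤ) else 0



private lemma firstStat_cons (a : ℕ) (l : List ℕ) :
    firstStat (a :: l) = if a = 0 then firstStat l + 1 else 0 := by
  by_cases h : a = 0 <;> simp [firstStat, List.takeWhile_cons, h]

private lemma firstStat_spec (l : List ℕ) :
    firstStat l ≤ l.length ∧ (∀ i < firstStat l, l.getD i 0 = 0) ∧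
      (firstStat l < l.length → l.getD (firstStat l) 0 ≠ 0) := by
  induction l with
  | nil => simp [firstStat]
  | cons a t ih =>
    obtain ⟨ih1, ih2, ih3⟩ := ih
    rw [firstStat_cons]
    by_cases ha : a = 0
    · rw [if_pos ha]
      refine ⟨by simp only [List.length_cons]; omega, ?_, ?_⟩
      · intro i hi
        match i with
        | 0 => simpa using ha
        | (j+1) => simpa using ih2 j (by omega)
      · intro h
        simpa using ih3 (by simp only [List.length_cons] at h; omega)
    · rw [if_neg ha]
      refine ⟨by simp, by intro i hi; exact absurd hi (by omega), ?_⟩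
      intro _
      simpa using ha

private lemma firstStat_eq_of (l : List ℕ) (t : ℕ) (ht : t ≤ l.length)
    (h0 : ∀ i < t, l.getD i 0 = 0) (h1 : t < l.length → l.getD t 0 ≠ 0) :
    firstStat l = t := by
  obtain ⟨hle, hz, hnz⟩ := firstStat_spec l
  by_contra hne
  rcases lt_or_gt_of_ne hne with h | h
  · exact hnz (by omega) (h0 _ h)
  · exact h1 (by omega) (hz _ h)

private lemma getD_take_eq (l : List ℕ) (t i : ℕ) (h : i < t) :
    (l.take t).getD i 0 = l.getD i 0 := by
  by_cases hi : i < l.length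
  · rw [List.getD_eq_getElem _ _ (by simp; omega), List.getD_eq_getElem _ _ hi]
    simp [List.getElem_take]
  · rw [List.getD_eq_default _ _ (by simp; omega), List.getD_eq_default _ _ (by omega)]

private lemma gval (n m k : ℕ) (hm : 1 ≤ m) (e f : List ℕ) (hen : e.length = n) (hfm : f.length = m)
    (hkn : k ≤ n) (hez : ∀ i < k, e.getD i 0 = 0) (x : ℕ) :
    (e.take k ++ f ++ (e.drop k).map (fun v => if v = 0 then 0 else v + m)).getD x 0 =
      if x < k then 0 else if x < k + m then f.getD (x - k) 0
      else if e.getD (x - m) 0 = 0 then 0 else e.getD (x - m) 0 + m := by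
  have htk : (e.take k).length = k := by rw [List.length_take, hen]; omega
  by_cases h1 : x < k
  · rw [if_pos h1, List.getD_append _ _ _ _ (by simp only [List.length_append, htk, hfm]; omega),
      List.getD_append _ _ _ _ (by omega)]
    rw [getD_take_eq _ _ _ h1]
    exact hez x h1
  · by_cases h2 : x < k + m
    · rw [if_neg h1, if_pos h2,
        List.getD_append _ _ _ _ (by simp only [List.length_append, htk, hfm]; omega),
        List.getD_append_right _ _ _ _ (by omega)]
      rw [htk]
    · rw [if_neg h1, if_neg h2,
        List.getD_append_right _ _ _ _ (by simp only [List.length_append, htk, hfm]; omega)]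
      simp only [List.length_append, htk, hfm]
      by_cases h3 : x < n + m
      · have hj : x - (k + m) < ((e.drop k).map (fun v => if v = 0 then 0 else v + m)).length := by
          simp only [List.length_map, List.length_drop, hen]; omega
        rw [List.getD_eq_getElem _ _ hj, List.getElem_map]
        have hxm : x - m < e.length := by rw [hen]; omega
        rw [List.getD_eq_getElem _ _ hxm]
        have : (e.drop k)[x - (k + m)]'(by simpa using hj) = e[x - m]'hxm := by
          rw [List.getElem_drop]
          congr 1
          omega
        rw [this]
      · rw [List.getD_eq_default _ _ (by simp only [List.length_map, List.length_drop, hen]; omega),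
          List.getD_eq_default _ _ (by rw [hen]; omega)]
        simp

/-- Lemma 7.4: the direct sum of `(101,021)`-avoiding inversion sequences. -/
theorem inv021_direct_sum (n m : ℕ) (hn : 1 ≤ n) (hm : 1 ≤ m) (e f : List ℕ)
    (he : e ∈ JSet n) (hf : f ∈ JSet m)
    (k l : ℕ) (hk : k = firstStat e) (hl : l = firstStat f)
    (g : List ℕ)
    (hg : g = e.take k ++ f ++ (e.drop k).map (fun v => if v = 0 then 0 else v + m)) :
    g ∈ JSet (n + m) ∧ firstStat g = k + l := by
  obtain ⟨hen, heI, he101, he021⟩ := he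
  obtain ⟨hfm, hfI, hf101, hf021⟩ := hf
  obtain ⟨hkle, hez, hek⟩ := firstStat_spec e
  rw [← hk] at hkle hez hek
  rw [hen] at hkle hek
  obtain ⟨hlle, hfz, hfl⟩ := firstStat_spec f
  rw [← hl] at hlle hfz hfl
  rw [hfm] at hlle hfl
  have hglen : g.length = n + m := by
    subst hg
    simp only [List.length_append, List.length_take, List.length_map, List.length_drop, hen, hfm]
    omega
  have hgval : ∀ x : ℕ, g.getD x 0 =
      if x < k then 0 else if x < k + m then f.getD (x - k) 0
      else if e.getD (x - m) 0 = 0 then 0 else e.getD (x - m) 0 + m := by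
    intro x
    rw [hg]
    exact gval n m k hm e f hen hfm hkle hez x
  have hele : ∀ p, e.getD p 0 ≤ p := by
    intro p
    by_cases hp : p < e.length
    · rw [List.getD_eq_getElem _ _ hp]
      have := heI ⟨p, hp⟩
      simp only [List.get_eq_getElem] at this
      omega
    · rw [List.getD_eq_default _ _ (by omega)]
      exact Nat.zero_le p
  have hfle : ∀ p, f.getD p 0 ≤ p := by
    intro p
    by_cases hp : p < f.length
    · rw [List.getD_eq_getElem _ _ hp]
      have := hfI ⟨p, hp⟩
      simp only [List.get_eq_getElem] at this
      omega
    · rw [List.getD_eq_default _ _ (by omega)]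
      exact Nat.zero_le p
  have he0 : e.getD 0 0 = 0 := by have := hele 0; omega
  have hf0 : f.getD 0 0 = 0 := by have := hfle 0; omega
  have hgget : ∀ (p : ℕ) (hp : p < g.length), g.get ⟨p, hp⟩ = g.getD p 0 :=
    fun p hp => (List.getD_eq_getElem g 0 hp).symm
  have heget : ∀ (p : ℕ) (hp : p < e.length), e.get ⟨p, hp⟩ = e.getD p 0 :=
    fun p hp => (List.getD_eq_getElem e 0 hp).symm
  have hfget : ∀ (p : ℕ) (hp : p < f.length), f.get ⟨p, hp⟩ = f.getD p 0 :=
    fun p hp => (List.getD_eq_getElem f 0 hp).symm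
  have hφlt : ∀ v w : ℕ, (if v = 0 then 0 else v + m) < (if w = 0 then 0 else w + m) → v < w := by
    intro v w h; split_ifs at h <;> omega
  have hφinj : ∀ v w : ℕ, (if v = 0 then 0 else v + m) = (if w = 0 then 0 else w + m) → v = w := by
    intro v w h; split_ifs at h <;> omega
  refine ⟨⟨hglen, ?_, ?_, ?_⟩, ?_⟩
  -- IsInvSeq g
  · rintro ⟨x, hx⟩
    have hx' : x < n + m := by rw [hglen] at hx; exact hx
    have h1 := hfle (x - k)
    have h2 := hele (x - m)
    simp only [Fin.val_mk]
    rw [hgget x hx, hgval x]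
    split_ifs <;> omega
  -- ¬ Contains101 g
  · rintro ⟨⟨a, ha⟩, ⟨b, hb⟩, ⟨c, hc⟩, hab, hbc, hvj, hvi⟩
    simp only [Fin.mk_lt_mk] at hab hbc
    have ha' : a < n + m := by rw [hglen] at ha; exact ha
    have hb' : b < n + m := by rw [hglen] at hb; exact hb
    have hc' : c < n + m := by rw [hglen] at hc; exact hc
    rw [hgget b hb, hgget a ha] at hvj
    rw [hgget a ha, hgget c hc] at hvi
    rw [hgval a, hgval b] at hvj
    rw [hgval a, hgval c] at hvi
    rcases Nat.lt_or_ge a k with hak | hak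
    · rw [if_pos hak] at hvj
      omega
    rcases Nat.lt_or_ge a (k + m) with ham | ham
    · -- a in B
      rw [if_neg (show ¬ a < k by omega), if_pos ham] at hvj hvi
      have hfa1 : 0 < f.getD (a - k) 0 := by omega
      have hfa2 : f.getD (a - k) 0 < m := by have := hfle (a - k); omega
      rcases Nat.lt_or_ge c (k + m) with hcm | hcm
      · -- c in B, b in B
        rw [if_neg (show ¬ b < k by omega), if_pos (show b < k + m by omega)] at hvj
        rw [if_neg (show ¬ c < k by omega), if_pos hcm] at hvi
        refine hf101 ⟨⟨a - k, by omega⟩, ⟨b - k, by omega⟩, ⟨c - k, by omega⟩,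
          Fin.mk_lt_mk.mpr (by omega), Fin.mk_lt_mk.mpr (by omega), ?_, ?_⟩
        · rw [hfget, hfget]; exact hvj
        · rw [hfget, hfget]; exact hvi
      · rw [if_neg (show ¬ c < k by omega), if_neg (show ¬ c < k + m by omega)] at hvi
        split_ifs at hvi <;> omega
    · -- a in C, hence b, c in C
      rw [if_neg (show ¬ a < k by omega), if_neg (show ¬ a < k + m by omega)] at hvj hvi
      rw [if_neg (show ¬ b < k by omega), if_neg (show ¬ b < k + m by omega)] at hvj
      rw [if_neg (show ¬ c < k by omega), if_neg (show ¬ c < k + m by omega)] at hvi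
      have h1 : e.getD (b - m) 0 < e.getD (a - m) 0 := hφlt _ _ hvj
      have h2 : e.getD (a - m) 0 = e.getD (c - m) 0 := hφinj _ _ hvi
      refine he101 ⟨⟨a - m, by omega⟩, ⟨b - m, by omega⟩, ⟨c - m, by omega⟩,
        Fin.mk_lt_mk.mpr (by omega), Fin.mk_lt_mk.mpr (by omega), ?_, ?_⟩
      · rw [heget, heget]; exact h1
      · rw [heget, heget]; exact h2
  -- ¬ Contains021 g
  · rintro ⟨⟨a, ha⟩, ⟨b, hb⟩, ⟨c, hc⟩, hab, hbc, hvi, hvk⟩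
    simp only [Fin.mk_lt_mk] at hab hbc
    have ha' : a < n + m := by rw [hglen] at ha; exact ha
    have hb' : b < n + m := by rw [hglen] at hb; exact hb
    have hc' : c < n + m := by rw [hglen] at hc; exact hc
    rw [hgget a ha, hgget c hc] at hvi
    rw [hgget b hb, hgget c hc] at hvk
    rw [hgval a, hgval c] at hvi
    rw [hgval b, hgval c] at hvk
    -- g_a < g_c, g_c < g_b ; so g_c ≥ 1, g_b ≥ 2
    rcases Nat.lt_or_ge c k with hck | hck
    · rw [if_pos hck] at hvi; omega
    rcases Nat.lt_or_ge c (k + m) with hcm | hcm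
    · -- c in B; b in B (g_b > g_c > 0 rules out A)
      rw [if_neg (show ¬ c < k by omega), if_pos hcm] at hvi hvk
      have hc1 : 0 < f.getD (c - k) 0 := by omega
      rcases Nat.lt_or_ge b k with hbk | hbk
      · rw [if_pos hbk] at hvk; omega
      rw [if_neg (show ¬ b < k by omega), if_pos (show b < k + m by omega)] at hvk
      have hb1 : 0 < f.getD (b - k) 0 := by omega
      have hb2 : b - k ≠ 0 := by
        intro h0; rw [h0, hf0] at hvk; omega
      refine hf021 ⟨⟨0, by omega⟩, ⟨b - k, by omega⟩, ⟨c - k, by omega⟩,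
        Fin.mk_lt_mk.mpr (by omega), Fin.mk_lt_mk.mpr (by omega), ?_, ?_⟩
      · rw [hfget, hfget, hf0]; omega
      · rw [hfget, hfget]; exact hvk
    · -- c in C
      rw [if_neg (show ¬ c < k by omega), if_neg (show ¬ c < k + m by omega)] at hvi hvk
      have hec : e.getD (c - m) 0 ≠ 0 := by
        intro h0; rw [if_pos h0] at hvi; omega
      rw [if_neg hec] at hvi hvk
      -- g_c = ec + m ≥ m + 1 ; g_b > that, so b in C
      rcases Nat.lt_or_ge b k with hbk | hbk
      · rw [if_pos hbk] at hvk; omega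
      rcases Nat.lt_or_ge b (k + m) with hbm | hbm
      · rw [if_neg (show ¬ b < k by omega), if_pos hbm] at hvk
        have := hfle (b - k); omega
      rw [if_neg (show ¬ b < k by omega), if_neg (show ¬ b < k + m by omega)] at hvk
      have heb : e.getD (b - m) 0 ≠ 0 := by
        intro h0; rw [if_pos h0] at hvk; omega
      rw [if_neg heb] at hvk
      have hbm0 : b - m ≠ 0 := by intro h0; rw [h0, he0] at heb; omega
      refine he021 ⟨⟨0, by omega⟩, ⟨b - m, by omega⟩, ⟨c - m, by omega⟩,
        Fin.mk_lt_mk.mpr (by omega), Fin.mk_lt_mk.mpr (by omega), ?_, ?_⟩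
      · rw [heget, heget, he0]; omega
      · rw [heget, heget]; omega
  -- firstStat g = k + l
  · apply firstStat_eq_of
    · omega
    · intro i hi
      rw [hgval i]
      rcases Nat.lt_or_ge i k with h1 | h1
      · rw [if_pos h1]
      · rw [if_neg (show ¬ i < k by omega), if_pos (show i < k + m by omega)]
        exact hfz (i - k) (by omega)
    · intro hlt
      rw [hglen] at hlt
      rw [hgval (k + l)]
      rcases Nat.lt_or_ge l m with h1 | h1
      · rw [if_neg (show ¬ k + l < k by omega), if_pos (show k + l < k + m by omega)]
        have h2 : k + l - k = l := by omega
        rw [h2]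
        exact hfl h1
      · have hl' : l = m := by omega
        have hkn : k < n := by omega
        rw [if_neg (show ¬ k + l < k by omega), if_neg (show ¬ k + l < k + m by omega)]
        have : k + l - m = k := by omega
        rw [this, if_neg (hek hkn)]
        omega
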